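/- There exists a family A(α,n) (for α < ω₁ and n ∈ ℕ) of infinite subsets of ℕ such that (a) for every countable set C of ordinals below ω₁ there is a function f : C → ℕ such that the family {A(α, f(α)) : α ∈ C} has the strong finite intersection property, and (b) there is no function f : ω₁ → ℕ such that the family {A(α, f(α)) : α < ω₁} has the strong finite intersection property. -/

import Mathlib

open Set Ordinal

/-- An index type of cardinality `ℵ₁`: the countable ordinals. -/
abbrev Omega1Index : Type 1 := {o : Ordinal // o < Ordinal.omega 1}

namespace AronszajnMatrixAux

open Cardinal

open scoped Classical

/-- A fixed bijection between finite binary strings and naturals. -/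
noncomputable def listEq : List Bool ≃ ℕ :=
  letI := Classical.choice (nonempty_denumerable (List Bool))
  Denumerable.eqv (List Bool)

/-- Least point of disagreement of two boolean sequences (junk value `0` if equal). -/
noncomputable def Dd (g h : ℕ → Bool) : ℕ := sInf {k | g k ≠ h k}

lemma Dd_agree {g h : ℕ → Bool} {m : ℕ} (hm : m < Dd g h) : g m = h m := by
  by_contra hne
  have hle : Dd g h ≤ m := Nat.sInf_le hne
  omega

lemma Dd_ne {g h : ℕ → Bool} (hgh : g ≠ h) : g (Dd g h) ≠ h (Dd g h) := by
  have hq : {k | g k ≠ h k}.Nonempty := by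
    by_contra h'
    rw [Set.not_nonempty_iff_eq_empty] at h'
    apply hgh
    funext m
    by_contra hm
    exact absurd (show m ∈ {k | g k ≠ h k} from hm) (by rw [h']; exact id)
  exact Nat.sInf_mem hq

lemma le_Dd {g h : ℕ → Bool} {k : ℕ} (hgh : g ≠ h) (hag : ∀ m < k, g m = h m) :
    k ≤ Dd g h := by
  by_contra hlt
  push_neg at hlt
  exact Dd_ne hgh (hag _ hlt)

lemma Dd_comm (g h : ℕ → Bool) : Dd g h = Dd h g := by
  rcases eq_or_ne g h with rfl | hne
  · rfl
  · apply le_antisymm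
    · exact le_Dd hne.symm fun m hm => (Dd_agree hm).symm
    · exact le_Dd hne fun m hm => (Dd_agree hm).symm

/-- The "virtual real" of a row with finite label `σ`: `σ` followed by the tail of `g`. -/
def Yv (σ : List Bool) (g : ℕ → Bool) (k : ℕ) : Bool := σ.getD k (g k)

/-- Length bound for the label built at step `j`. -/
noncomputable def Nn (w : ℕ → ℕ → Bool) (j : ℕ) : ℕ :=
  ((Finset.range j).sup fun i => Dd (w i) (w j)) + 1

/-- One step of the recursive construction of labels. -/
noncomputable def stepσ (w : ℕ → ℕ → Bool) (j : ℕ) (prev : List (List Bool)) : List Bool :=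
  List.ofFn fun k : Fin (Nn w j) =>
    if h : ∃ i, i < j ∧ (k : ℕ) ≤ Dd (w i) (w j) then
      (prev.getD (Nat.find h) []).getD k (w (Nat.find h) k)
    else false

noncomputable def sigs (w : ℕ → ℕ → Bool) : ℕ → List (List Bool)
  | 0 => []
  | j + 1 => sigs w j ++ [stepσ w j (sigs w j)]

noncomputable def sigf (w : ℕ → ℕ → Bool) (j : ℕ) : List Bool :=
  (sigs w (j + 1)).getD j []

lemma length_sigs (w : ℕ → ℕ → Bool) (j : ℕ) : (sigs w j).length = j := by
  induction j with
  | zero => rfl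
  | succ j ih => simp [sigs, ih]

lemma sigf_eq_step (w : ℕ → ℕ → Bool) (j : ℕ) : sigf w j = stepσ w j (sigs w j) := by
  rw [sigf]
  show ((sigs w j) ++ [stepσ w j (sigs w j)]).getD j [] = _
  rw [List.getD_append_right _ _ _ _ (by rw [length_sigs])]
  rw [length_sigs]
  simp

lemma sigs_getD (w : ℕ → ℕ → Bool) {m i : ℕ} (him : i < m) :
    (sigs w m).getD i [] = sigf w i := by
  induction m with
  | zero => omega
  | succ m ih =>
    rcases Nat.lt_or_ge i m with hlt | hge
    · rw [show sigs w (m+1) = sigs w m ++ [stepσ w m (sigs w m)] from rfl,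
        List.getD_append _ _ _ _ (by rw [length_sigs]; exact hlt)]
      exact ih hlt
    · have hi : i = m := by omega
      subst hi
      rw [show sigs w (i+1) = sigs w i ++ [stepσ w i (sigs w i)] from rfl,
        List.getD_append_right _ _ _ _ (by rw [length_sigs])]
      rw [length_sigs]
      simp [sigf_eq_step]

lemma length_sigf (w : ℕ → ℕ → Bool) (j : ℕ) : (sigf w j).length = Nn w j := by
  rw [sigf_eq_step, stepσ, List.length_ofFn]

lemma sigf_getD (w : ℕ → ℕ → Bool) {j k : ℕ} (hk : k < Nn w j) :
    (sigf w j).getD k false =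
      if h : ∃ i, i < j ∧ k ≤ Dd (w i) (w j) then
        Yv (sigf w (Nat.find h)) (w (Nat.find h)) k
      else false := by
  rw [sigf_eq_step, stepσ, List.getD_eq_getElem _ _ (by rw [List.length_ofFn]; exact hk),
    List.getElem_ofFn]
  split
  · next h =>
    have hfind : Nat.find h < j := (Nat.find_spec h).1
    rw [sigs_getD w hfind]
    rfl
  · rfl

/-- Key coherence invariant of the recursive construction. -/
lemma compat (w : ℕ → ℕ → Bool) (hw : ∀ i j, i ≠ j → w i ≠ w j) :
    ∀ j, ∀ i < j, ∀ k ≤ Dd (w i) (w j),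
      Yv (sigf w i) (w i) k = Yv (sigf w j) (w j) k := by
  intro j
  induction j using Nat.strong_induction_on with
  | _ j IH =>
    intro i hij k hk
    have h : ∃ i', i' < j ∧ k ≤ Dd (w i') (w j) := ⟨i, hij, hk⟩
    have hkN : k < Nn w j := by
      have hle : Dd (w i) (w j) ≤ (Finset.range j).sup fun i => Dd (w i) (w j) :=
        Finset.le_sup (f := fun i => Dd (w i) (w j)) (Finset.mem_range.mpr hij)
      have := hk.trans hle
      rw [Nn]; omega
    have hYj : Yv (sigf w j) (w j) k = Yv (sigf w (Nat.find h)) (w (Nat.find h)) k := by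
      have hlen : k < (sigf w j).length := by rw [length_sigf]; exact hkN
      rw [Yv, List.getD_eq_getElem _ _ hlen, ← List.getD_eq_getElem _ false hlen,
        sigf_getD w hkN, dif_pos h]
    obtain ⟨hi0j, hki0⟩ := Nat.find_spec h
    rcases eq_or_ne i (Nat.find h) with heq | hne
    · rw [hYj, ← heq]
    · have hD : k ≤ Dd (w i) (w (Nat.find h)) := by
        apply le_Dd (hw _ _ hne)
        intro m hm
        have h1 : w i m = w j m := Dd_agree (lt_of_lt_of_le hm hk)
        have h2 : w (Nat.find h) m = w j m := Dd_agree (lt_of_lt_of_le hm hki0)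
        rw [h1, h2]
      rcases lt_or_gt_of_ne hne with hlt | hgt
      · rw [hYj]
        exact IH (Nat.find h) hi0j i hlt k hD
      · rw [hYj]
        exact (IH i hij (Nat.find h) hgt k (by rwa [Dd_comm])).symm

/-- The node of length `k` along the branch `g`. -/
def nodeL (g : ℕ → Bool) (k : ℕ) : List Bool := List.ofFn fun m : Fin k => g m

lemma nodeL_length (g : ℕ → Bool) (k : ℕ) : (nodeL g k).length = k := List.length_ofFn

lemma nodeL_eq_iff {g h : ℕ → Bool} {k : ℕ} :
    nodeL g k = nodeL h k ↔ ∀ m < k, g m = h m := by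
  rw [nodeL, nodeL, List.ofFn_inj]
  constructor
  · intro hfg m hm
    exact congrFun hfg ⟨m, hm⟩
  · intro hag
    funext m
    exact hag m m.2

/-- The basic sets, as sets of finite binary strings. A string `u` is in the set iff
whenever the `i`-th string (in a fixed enumeration) is a node on the branch `g`,
the `i`-th entry of `u` takes the value prescribed by the virtual real. -/
def SS (g : ℕ → Bool) (σ : List Bool) : Set (List Bool) :=
  { u | ∀ i < u.length, ∀ k, listEq.symm i = nodeL g k →
      u.getD i false = Yv σ g k }

/-- Pairwise coherent finite families have infinite intersection. -/
lemma INT {ι : Type*} (T : Finset ι) (G : ι → ℕ → Bool) (S' : ι → List Bool)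
    (hG : ∀ a ∈ T, ∀ b ∈ T, a ≠ b → G a ≠ G b)
    (hc : ∀ a ∈ T, ∀ b ∈ T, a ≠ b → ∀ k, k ≤ Dd (G a) (G b) →
      Yv (S' a) (G a) k = Yv (S' b) (G b) k) :
    (⋂ a ∈ T, SS (G a) (S' a)).Infinite := by
  set val : ℕ → Bool := fun i =>
    if h : ∃ a, a ∈ T ∧ ∃ k, listEq.symm i = nodeL (G a) k then
      Yv (S' h.choose) (G h.choose) (listEq.symm i).length
    else false with hval
  have key : ∀ L : ℕ, (List.ofFn fun i : Fin L => val i) ∈ ⋂ a ∈ T, SS (G a) (S' a) := by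
    intro L
    rw [Set.mem_iInter₂]
    intro b hb
    intro i hi k hk
    have hgetD : (List.ofFn fun i : Fin L => val i).getD i false = val i := by
      rw [List.getD_eq_getElem _ _ hi, List.getElem_ofFn]
    rw [hgetD]
    have h : ∃ a, a ∈ T ∧ ∃ k, listEq.symm i = nodeL (G a) k :=
      ⟨b, hb, k, hk⟩
    have hknu : (listEq.symm i).length = k := by
      rw [hk, nodeL_length]
    obtain ⟨haT, k', hk'⟩ := h.choose_spec
    have hk'k : k' = k := by
      have := congrArg List.length hk'
      rw [nodeL_length] at this
      omega
    subst hk'k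
    simp only [hval]
    rw [dif_pos h, hknu]
    rcases eq_or_ne h.choose b with heq | hne
    · rw [heq]
    · have hnodes : nodeL (G h.choose) k' = nodeL (G b) k' := by rw [← hk', ← hk]
      have hagree : ∀ m < k', G h.choose m = G b m := nodeL_eq_iff.mp hnodes
      have hDk : k' ≤ Dd (G h.choose) (G b) := le_Dd (hG _ haT _ hb hne) hagree
      exact hc _ haT _ hb hne k' hDk
  have hinj : Function.Injective fun L : ℕ => (List.ofFn fun i : Fin L => val i) := by
    intro L L' hLL
    have := congrArg List.length hLL
    simpa using this
  exact Set.infinite_of_injective_forall_mem hinj key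

/-- Two rows with the same label whose branches agree beyond the label's length
have finite intersection. -/
lemma FIN {g h : ℕ → Bool} (σ : List Bool) (hgh : g ≠ h) (hlen : σ.length ≤ Dd g h) :
    (SS g σ ∩ SS h σ).Finite := by
  apply (List.finite_length_le Bool (listEq (nodeL g (Dd g h)))).subset
  rintro u ⟨hug, huh⟩
  show u.length ≤ listEq (nodeL g (Dd g h))
  by_contra hlong
  push_neg at hlong
  have hν : listEq.symm (listEq (nodeL g (Dd g h)))
      = nodeL g (Dd g h) := Equiv.symm_apply_apply _ _
  have hν2 : listEq.symm (listEq (nodeL g (Dd g h)))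
      = nodeL h (Dd g h) := by
    rw [hν]
    exact nodeL_eq_iff.mpr fun m hm => Dd_agree hm
  have h1 := hug _ hlong _ hν
  have h2 := huh _ hlong _ hν2
  rw [Yv, List.getD_eq_default _ _ hlen] at h1
  rw [Yv, List.getD_eq_default _ _ hlen] at h2
  exact Dd_ne hgh (h1 ▸ h2)

lemma mk_Omega1 :
    Cardinal.mk Omega1Index = Cardinal.lift.{1} (Ordinal.card.{0} (Ordinal.omega 1)) :=
  Ordinal.mk_Iio_ordinal _

lemma not_countable_Omega1 : ¬ Countable Omega1Index := by
  intro hc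
  have hle : Cardinal.mk Omega1Index ≤ ℵ₀ := Cardinal.mk_le_aleph0
  rw [mk_Omega1, Ordinal.card_omega, ← Cardinal.lift_aleph0.{1, 0},
    Cardinal.lift_le] at hle
  exact absurd hle (Cardinal.aleph0_lt_aleph_one).not_ge

lemma exists_xmap : ∃ x : Omega1Index → ℕ → Bool, Function.Injective x := by
  have hc : Cardinal.mk (ℕ → Bool) = Cardinal.continuum := by
    rw [← Cardinal.two_power_aleph0, ← Cardinal.mk_bool, ← Cardinal.mk_nat,
      Cardinal.power_def]
  have hle : Cardinal.lift.{0} (Cardinal.mk Omega1Index) ≤ Cardinal.lift.{1} (Cardinal.mk (ℕ → Bool)) := by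
    rw [mk_Omega1, Ordinal.card_omega, hc, Cardinal.lift_lift]
    exact Cardinal.lift_le.mpr Cardinal.aleph_one_le_continuum
  obtain ⟨e⟩ := Cardinal.lift_mk_le'.mp hle
  exact ⟨e, e.injective⟩

end AronszajnMatrixAux

open AronszajnMatrixAux in
/-- There is an `ω₁ × ω` matrix `A(α,n)` of infinite subsets of `ℕ` such that
(a) for every countable `C ⊆ ω₁` some selector `f` makes `{A(α, f α) : α ∈ C}` have the
strong finite intersection property, and
(b) no selector `f` makes the whole family `{A(α, f α) : α < ω₁}` have the strong finite
intersection property. -/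
theorem exists_aronszajn_matrix :
    ∃ A : Omega1Index → ℕ → Set ℕ,
      (∀ α n, (A α n).Infinite) ∧
      (∀ C : Set Omega1Index, C.Countable →
        ∃ f : Omega1Index → ℕ, ∀ F : Finset Omega1Index, ↑F ⊆ C →
          (⋂ α ∈ F, A α (f α)).Infinite) ∧
      ¬ ∃ f : Omega1Index → ℕ, ∀ F : Finset Omega1Index,
          (⋂ α ∈ F, A α (f α)).Infinite := by
  classical
  obtain ⟨x, hxinj⟩ := exists_xmap
  refine ⟨fun α n => listEq '' SS (x α) (listEq.symm n),
    ?_, ?_, ?_⟩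
  · -- each set is infinite
    intro α n
    have h := INT ({α} : Finset Omega1Index) x
      (fun _ => listEq.symm n)
      (by intro a ha b hb hab
          rw [Finset.mem_singleton] at ha hb
          exact absurd (ha.trans hb.symm) hab)
      (by intro a ha b hb hab
          rw [Finset.mem_singleton] at ha hb
          exact absurd (ha.trans hb.symm) hab)
    rw [Finset.set_biInter_singleton] at h
    exact h.image (listEq.injective.injOn)
  · -- countable selectors exist
    intro C hC
    haveI : Infinite Omega1Index := by
      rw [← not_finite_iff_infinite]
      intro hfin
      exact not_countable_Omega1 (Finite.to_countable)
    set z : ℕ → Omega1Index := fun n => (Infinite.natEmbedding Omega1Index) n with hz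
    set C' : Set Omega1Index := C ∪ Set.range z with hC'def
    have hC'count : C'.Countable := hC.union (Set.countable_range z)
    have hC'inf : C'.Infinite :=
      Set.Infinite.mono Set.subset_union_right
        (Set.infinite_range_of_injective (Infinite.natEmbedding Omega1Index).injective)
    haveI : Countable ↥C' := hC'count.to_subtype
    haveI : Infinite ↥C' := hC'inf.to_subtype
    obtain ⟨denum⟩ := nonempty_denumerable ↥C'
    letI := denum
    set ψ : ↥C' ≃ ℕ := Denumerable.eqv ↥C' with hψ
    set e : ℕ → Omega1Index := fun j => ((ψ.symm j : ↥C') : Omega1Index) with he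
    have heinj : Function.Injective e := by
      intro a b hab
      have : ψ.symm a = ψ.symm b := Subtype.coe_injective hab
      exact ψ.symm.injective this
    set w : ℕ → ℕ → Bool := fun j => x (e j) with hwdef
    have hw : ∀ i j, i ≠ j → w i ≠ w j := by
      intro i j hij hcontr
      exact hij (heinj (hxinj hcontr))
    have hkey : ∀ (a : Omega1Index) (ha : a ∈ C') (b : Omega1Index) (hb : b ∈ C'),
        a ≠ b → ∀ k, k ≤ Dd (x a) (x b) →
        Yv (sigf w (ψ ⟨a, ha⟩)) (x a) k = Yv (sigf w (ψ ⟨b, hb⟩)) (x b) k := by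
      intro a haC' b hbC' hab k hk
      have hei : e (ψ ⟨a, haC'⟩) = a := by
        show ((ψ.symm (ψ ⟨a, haC'⟩) : ↥C') : Omega1Index) = a
        rw [Equiv.symm_apply_apply]
      have hej : e (ψ ⟨b, hbC'⟩) = b := by
        show ((ψ.symm (ψ ⟨b, hbC'⟩) : ↥C') : Omega1Index) = b
        rw [Equiv.symm_apply_apply]
      have hij : ψ ⟨a, haC'⟩ ≠ ψ ⟨b, hbC'⟩ := by
        intro hcontr
        apply hab
        rw [← hei, ← hej, hcontr]
      have hxa : x a = w (ψ ⟨a, haC'⟩) := by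
        show x a = x (e (ψ ⟨a, haC'⟩))
        rw [hei]
      have hxb : x b = w (ψ ⟨b, hbC'⟩) := by
        show x b = x (e (ψ ⟨b, hbC'⟩))
        rw [hej]
      rw [hxa, hxb]
      rw [hxa, hxb] at hk
      rcases lt_or_gt_of_ne hij with hlt | hgt
      · exact compat w hw _ _ hlt k hk
      · exact (compat w hw _ _ hgt k (by rwa [Dd_comm])).symm
    refine ⟨fun α => if h : α ∈ C' then listEq (sigf w (ψ ⟨α, h⟩)) else 0, ?_⟩
    intro F hF
    have hFC' : ∀ γ ∈ F, γ ∈ C' := fun γ hγ => Set.mem_union_left _ (hF hγ)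
    have hcomp : ∀ a ∈ F, ∀ b ∈ F, a ≠ b → ∀ k, k ≤ Dd (x a) (x b) →
        Yv (listEq.symm (if h : a ∈ C' then listEq (sigf w (ψ ⟨a, h⟩)) else 0)) (x a) k =
        Yv (listEq.symm (if h : b ∈ C' then listEq (sigf w (ψ ⟨b, h⟩)) else 0)) (x b) k := by
      intro a ha b hb hab k hk
      have haC' : a ∈ C' := hFC' a ha
      have hbC' : b ∈ C' := hFC' b hb
      rw [dif_pos haC', dif_pos hbC', Equiv.symm_apply_apply, Equiv.symm_apply_apply]
      exact hkey a haC' b hbC' hab k hk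
    have hint := INT F x
      (fun γ => listEq.symm (if h : γ ∈ C' then listEq (sigf w (ψ ⟨γ, h⟩)) else 0))
      (fun a ha b hb hab => fun hcontr => hab (hxinj hcontr))
      hcomp
    refine Set.Infinite.mono ?_ (hint.image (listEq.injective.injOn))
    exact Set.image_iInter₂_subset _ _
  · -- no global selector
    rintro ⟨f, hf⟩
    have hfiber : ∃ n, ¬ (f ⁻¹' {n}).Countable := by
      by_contra hall
      push_neg at hall
      have huniv : (Set.univ : Set Omega1Index).Countable := by
        have he : (Set.univ : Set Omega1Index) = ⋃ n, f ⁻¹' {n} := by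
          ext α; simp
        rw [he]
        exact Set.countable_iUnion hall
      exact not_countable_Omega1 (Set.countable_univ_iff.mp huniv)
    obtain ⟨n, hn⟩ := hfiber
    set σ := listEq.symm n with hσ
    have hTinf : (f ⁻¹' {n}).Infinite := fun hfin => hn hfin.countable
    obtain ⟨α, hα, β, hβ, hne, heq⟩ :=
      hTinf.exists_ne_map_eq_of_mapsTo
        (Set.mapsTo_univ (fun γ : Omega1Index => fun m : Fin σ.length => x γ m) _)
        Set.finite_univ
    have hxne : x α ≠ x β := fun hcontr => hne (hxinj hcontr)
    have hagree : ∀ m < σ.length, x α m = x β m := by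
      intro m hm
      exact congrFun heq ⟨m, hm⟩
    have hD : σ.length ≤ Dd (x α) (x β) := le_Dd hxne hagree
    have hfin2 : (SS (x α) σ ∩ SS (x β) σ).Finite := FIN σ hxne hD
    have hfα : f α = n := hα
    have hfβ : f β = n := hβ
    have hsub : (⋂ γ ∈ ({α, β} : Finset Omega1Index),
        listEq '' SS (x γ) (listEq.symm (f γ)))
        ⊆ listEq '' (SS (x α) σ ∩ SS (x β) σ) := by
      rw [Set.image_inter listEq.injective]
      intro u hu
      rw [Set.mem_iInter₂] at hu
      constructor
      · have := hu α (by simp)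
        rwa [hfα, ← hσ] at this
      · have := hu β (by simp)
        rwa [hfβ, ← hσ] at this
    exact (hf ({α, β} : Finset Omega1Index)) ((hfin2.image _).subset hsub)
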